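/- arXiv:math/0401127 — 4 statements merged into one kernel-verified Lean document; each statement's English description precedes it below -/
import Mathlib

section
/- The map s ↦ s^{-1} is a measurable bijection of the cone P_m of positive definite symmetric m×m matrices onto itself, and the Lebesgue measure transforms as dr = |det s|^{-(m+1)} ds under r = s^{-1}; i.e., for integrable f, ∫_{P_m} f(s^{-1}) |det s|^{-(m+1)} ds = ∫_{P_m} f(r) dr. -/
open MeasureTheory Matrix

attribute [local instance] Classical.propDecidable

noncomputable instance matMeasureSpace {α β : Type*} [Fintype α] [Fintype β] :
    MeasureSpace (Matrix α β ℝ) :=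
  inferInstanceAs (MeasureSpace (α → β → ℝ))

/-- Coordinates `(r_{ij})_{i ≤ j}` on the space of symmetric `m × m` matrices,
carrying the Lebesgue measure `∏_{i ≤ j} dr_{ij}`. -/
abbrev SymCoord (m : ℕ) := {p : Fin m × Fin m // p.1 ≤ p.2} → ℝ

/-- The symmetric matrix determined by its upper-triangular coordinates. -/
def symOf {m : ℕ} (u : SymCoord m) : Matrix (Fin m) (Fin m) ℝ :=
  Matrix.of fun i j => if h : i ≤ j then u ⟨(i, j), h⟩ else u ⟨(j, i), (le_total i j).resolve_left h⟩

/-- The Siegel gamma function `Γ_m(α) = π^{m(m-1)/4} ∏_{j=0}^{m-1} Γ(α - j/2)`. -/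
noncomputable def SiegelGammaC (m : ℕ) (α : ℂ) : ℂ :=
  (Real.pi : ℂ) ^ (((m * (m - 1) : ℕ) : ℂ) / 4) *
    ∏ j ∈ Finset.range m, Complex.Gamma (α - (j : ℂ) / 2)


namespace SiegelAux

variable {m : ℕ}

def coordOf {m : ℕ} (M : Matrix (Fin m) (Fin m) ℝ) : SymCoord m := fun p => M p.1.1 p.1.2

lemma symOf_apply_le (u : SymCoord m) {i j : Fin m} (h : i ≤ j) :
    symOf u i j = u ⟨(i, j), h⟩ := by
  simp only [symOf, Matrix.of_apply, dif_pos h]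

lemma symOf_symm (u : SymCoord m) (i j : Fin m) : symOf u j i = symOf u i j := by
  simp only [symOf, Matrix.of_apply]
  by_cases h : i ≤ j
  · by_cases h' : j ≤ i
    · cases le_antisymm h h'
      simp
    · rw [dif_neg h', dif_pos h]
  · have h' : j ≤ i := le_of_not_ge h
    rw [dif_pos h', dif_neg h]

lemma symOf_transpose (u : SymCoord m) : (symOf u)ᵀ = symOf u := by
  ext i j; rw [Matrix.transpose_apply, symOf_symm]

lemma symOf_isHermitian (u : SymCoord m) : (symOf u).IsHermitian := by
  show _ = _
  ext i j
  rw [Matrix.conjTranspose_apply, star_trivial, symOf_symm]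

lemma coordOf_symOf (u : SymCoord m) : coordOf (symOf u) = u := by
  funext p
  obtain ⟨⟨i, j⟩, h⟩ := p
  exact symOf_apply_le u h

lemma symOf_coordOf {M : Matrix (Fin m) (Fin m) ℝ} (h : Mᵀ = M) :
    symOf (coordOf M) = M := by
  ext i j
  simp only [symOf, Matrix.of_apply, coordOf]
  by_cases hij : i ≤ j
  · rw [dif_pos hij]
  · rw [dif_neg hij]
    exact (Matrix.transpose_apply M i j) ▸ congrFun (congrFun h i) j

def symOfL : SymCoord m →ₗ[ℝ] Matrix (Fin m) (Fin m) ℝ where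
  toFun := symOf
  map_add' u v := by
    ext i j
    simp only [symOf, Matrix.of_apply, Matrix.add_apply, Pi.add_apply]
    split <;> rfl
  map_smul' c u := by
    ext i j
    simp only [symOf, Matrix.of_apply, Matrix.smul_apply, Pi.smul_apply, RingHom.id_apply]
    split <;> rfl

def coordOfL : Matrix (Fin m) (Fin m) ℝ →ₗ[ℝ] SymCoord m where
  toFun := coordOf
  map_add' _ _ := rfl
  map_smul' _ _ := rfl

lemma symOfL_apply (u : SymCoord m) : (symOfL u : Matrix (Fin m) (Fin m) ℝ) = symOf u := rfl

lemma coordOfL_apply (M : Matrix (Fin m) (Fin m) ℝ) : coordOfL M = coordOf M := rfl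

lemma continuous_symOf : Continuous (symOf : SymCoord m → Matrix (Fin m) (Fin m) ℝ) := by
  apply continuous_matrix
  intro i j
  simp only [symOf, Matrix.of_apply]
  by_cases h : i ≤ j
  · simp only [dif_pos h]; exact continuous_apply _
  · simp only [dif_neg h]; exact continuous_apply _

section Helpers

variable {X : Type*} [MeasurableSpace X]
variable {E : Type*} [NormedAddCommGroup E] [NormedSpace ℝ E]

lemma measurable_det_of_entries {f : X → Matrix (Fin m) (Fin m) ℝ}
    (h : ∀ i j, Measurable fun x => f x i j) :
    Measurable fun x => (f x).det := by
  simp_rw [Matrix.det_apply']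
  exact Finset.measurable_sum _ fun σ _ =>
    Measurable.const_mul (Finset.measurable_prod _ fun i _ => h _ _) _

lemma differentiable_det_of_entries {f : E → Matrix (Fin m) (Fin m) ℝ}
    (h : ∀ i j, Differentiable ℝ fun x => f x i j) :
    Differentiable ℝ fun x => (f x).det := by
  simp_rw [Matrix.det_apply']
  refine Differentiable.fun_sum fun σ _ => ?_
  refine Differentiable.const_mul ?_ _
  intro x
  exact (HasFDerivAt.finset_prod fun i _ => ((h _ i x).hasFDerivAt)).differentiableAt

lemma measurable_adjugate_entry {f : X → Matrix (Fin m) (Fin m) ℝ}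
    (h : ∀ i j, Measurable fun x => f x i j) (i j : Fin m) :
    Measurable fun x => (f x).adjugate i j := by
  simp_rw [Matrix.adjugate_apply]
  refine measurable_det_of_entries fun k l => ?_
  simp_rw [Matrix.updateRow_apply]
  by_cases hk : k = j
  · simp only [hk, if_pos rfl]; exact measurable_const
  · simp only [if_neg hk]; exact h _ _

lemma differentiable_adjugate_entry {f : E → Matrix (Fin m) (Fin m) ℝ}
    (h : ∀ i j, Differentiable ℝ fun x => f x i j) (i j : Fin m) :
    Differentiable ℝ fun x => (f x).adjugate i j := by
  simp_rw [Matrix.adjugate_apply]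
  refine differentiable_det_of_entries fun k l => ?_
  simp_rw [Matrix.updateRow_apply]
  by_cases hk : k = j
  · simp only [hk, if_pos rfl]; exact differentiable_const _
  · simp only [if_neg hk]; exact h _ _

end Helpers

/-- The conjugation action `u ↦ coords of (A (symOf u) Aᵀ)` as a linear endomorphism. -/
noncomputable def conjL (A : Matrix (Fin m) (Fin m) ℝ) : SymCoord m →ₗ[ℝ] SymCoord m :=
  coordOfL ∘ₗ (LinearMap.mulRight ℝ Aᵀ) ∘ₗ (LinearMap.mulLeft ℝ A) ∘ₗ symOfL

lemma conjL_apply (A : Matrix (Fin m) (Fin m) ℝ) (u : SymCoord m) :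
    conjL A u = coordOf (A * symOf u * Aᵀ) := by
  simp [conjL, symOfL_apply, coordOfL_apply, LinearMap.mulLeft_apply, LinearMap.mulRight_apply,
    mul_assoc]

lemma isSymm_conj (A : Matrix (Fin m) (Fin m) ℝ) {M : Matrix (Fin m) (Fin m) ℝ}
    (hM : Mᵀ = M) : (A * M * Aᵀ)ᵀ = A * M * Aᵀ := by
  simp [Matrix.transpose_mul, hM, Matrix.mul_assoc]

lemma conjL_mul (A B : Matrix (Fin m) (Fin m) ℝ) :
    conjL (A * B) = (conjL A).comp (conjL B) := by
  apply LinearMap.ext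
  intro u
  simp only [LinearMap.comp_apply, conjL_apply]
  rw [symOf_coordOf (isSymm_conj B (symOf_transpose u))]
  rw [Matrix.transpose_mul]
  noncomm_ring

lemma conjL_one : conjL (1 : Matrix (Fin m) (Fin m) ℝ) = LinearMap.id := by
  apply LinearMap.ext
  intro u
  simp [conjL_apply, coordOf_symOf]

lemma conjL_diagonal (d : Fin m → ℝ) :
    conjL (Matrix.diagonal d) =
      Matrix.toLin' (Matrix.diagonal fun p : {p : Fin m × Fin m // p.1 ≤ p.2} =>
        d p.1.1 * d p.1.2) := by
  apply LinearMap.ext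
  intro u
  funext p
  rw [conjL_apply]
  show (Matrix.diagonal d * symOf u * (Matrix.diagonal d)ᵀ) p.1.1 p.1.2 = _
  rw [Matrix.diagonal_transpose, Matrix.toLin'_apply, Matrix.mulVec_diagonal,
    Matrix.mul_diagonal, Matrix.diagonal_mul, symOf_apply_le u p.2]
  ring

lemma det_conjL_diagonal (d : Fin m → ℝ) :
    LinearMap.det (conjL (Matrix.diagonal d)) =
      ∏ p : {p : Fin m × Fin m // p.1 ≤ p.2}, d p.1.1 * d p.1.2 := by
  rw [conjL_diagonal, LinearMap.det_toLin', Matrix.det_diagonal]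

lemma prod_pairs (d : Fin m → ℝ) (hd : ∀ i, 0 < d i) :
    ∏ p : {p : Fin m × Fin m // p.1 ≤ p.2}, d p.1.1 * d p.1.2 = (∏ i, d i) ^ (m + 1) := by
  set P := ∏ i, d i with hP
  have hPpos : 0 < P := Finset.prod_pos fun i _ => hd i
  have hLpos : 0 < ∏ p : {p : Fin m × Fin m // p.1 ≤ p.2}, d p.1.1 * d p.1.2 :=
    Finset.prod_pos fun p _ => mul_pos (hd _) (hd _)
  -- convert to filter product
  have hsub : ∏ p : {p : Fin m × Fin m // p.1 ≤ p.2}, d p.1.1 * d p.1.2 =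
      ∏ p ∈ Finset.univ.filter (fun p : Fin m × Fin m => p.1 ≤ p.2), d p.1 * d p.2 := by
    exact Finset.prod_subtype (Finset.univ.filter (fun p : Fin m × Fin m => p.1 ≤ p.2))
      (p := fun p : Fin m × Fin m => p.1 ≤ p.2) (fun x => by simp) (fun p => d p.1 * d p.2) |>.symm
  -- the "lower" product equals the "upper" one by swapping
  have hswap : ∏ p ∈ Finset.univ.filter (fun p : Fin m × Fin m => p.2 ≤ p.1), d p.1 * d p.2 =
      ∏ p ∈ Finset.univ.filter (fun p : Fin m × Fin m => p.1 ≤ p.2), d p.1 * d p.2 := by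
    refine Finset.prod_nbij' (fun p => p.swap) (fun p => p.swap) ?_ ?_ ?_ ?_ ?_
    · intro p hp; simp only [Finset.mem_filter, Finset.mem_univ, true_and] at hp ⊢; exact hp
    · intro p hp; simp only [Finset.mem_filter, Finset.mem_univ, true_and] at hp ⊢; exact hp
    · intro p _; simp
    · intro p _; simp
    · intro p _; simp [mul_comm]
  -- union and intersection
  have hunion : (Finset.univ.filter (fun p : Fin m × Fin m => p.1 ≤ p.2)) ∪
      (Finset.univ.filter (fun p : Fin m × Fin m => p.2 ≤ p.1)) = Finset.univ := by
    ext p; simp [le_total p.1 p.2]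
  have hinter : (Finset.univ.filter (fun p : Fin m × Fin m => p.1 ≤ p.2)) ∩
      (Finset.univ.filter (fun p : Fin m × Fin m => p.2 ≤ p.1)) =
      Finset.univ.filter (fun p : Fin m × Fin m => p.1 = p.2) := by
    ext p
    simp only [Finset.mem_inter, Finset.mem_filter, Finset.mem_univ, true_and]
    constructor
    · rintro ⟨h1, h2⟩; exact le_antisymm h1 h2
    · rintro h; exact ⟨le_of_eq h, le_of_eq h.symm⟩
  have hkey := Finset.prod_union_inter (s₁ := Finset.univ.filter (fun p : Fin m × Fin m => p.1 ≤ p.2))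
    (s₂ := Finset.univ.filter (fun p : Fin m × Fin m => p.2 ≤ p.1))
    (f := fun p : Fin m × Fin m => d p.1 * d p.2)
  rw [hunion, hinter, hswap] at hkey
  -- compute full product
  have hfull : ∏ p : Fin m × Fin m, d p.1 * d p.2 = P ^ (2 * m) := by
    rw [Fintype.prod_prod_type]
    simp only [Finset.prod_mul_distrib, Finset.prod_const, ← hP]
    rw [Finset.prod_pow, ← hP, Finset.card_univ, Fintype.card_fin]
    ring
  have hdiagset : (Finset.univ.filter (fun p : Fin m × Fin m => p.1 = p.2)) =
      Finset.univ.image (fun i : Fin m => (i, i)) := by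
    ext ⟨a, b⟩
    simp only [Finset.mem_filter, Finset.mem_univ, true_and, Finset.mem_image, Prod.mk.injEq]
    aesop
  have hdiag : ∏ p ∈ Finset.univ.filter (fun p : Fin m × Fin m => p.1 = p.2), d p.1 * d p.2
      = P ^ 2 := by
    rw [hdiagset, Finset.prod_image (by intro a _ b _ h; exact (Prod.mk.injEq _ _ _ _ ▸ h).1)]
    rw [Finset.prod_mul_distrib, ← hP, sq]
  rw [hfull, hdiag] at hkey
  rw [hsub]
  have hsq : (∏ p ∈ Finset.univ.filter (fun p : Fin m × Fin m => p.1 ≤ p.2), d p.1 * d p.2) ^ 2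
      = (P ^ (m + 1)) ^ 2 := by
    rw [sq, ← hkey]; ring
  have h0 : (0:ℝ) ≤ ∏ p ∈ Finset.univ.filter (fun p : Fin m × Fin m => p.1 ≤ p.2), d p.1 * d p.2 :=
    Finset.prod_nonneg fun p _ => le_of_lt (mul_pos (hd _) (hd _))
  exact (sq_eq_sq₀ h0 (le_of_lt (pow_pos hPpos _))).mp hsq

lemma det_conjL_posDef {S : Matrix (Fin m) (Fin m) ℝ} (hS : S.PosDef) :
    LinearMap.det (conjL S) = S.det ^ (m + 1) := by
  have hH : S.IsHermitian := hS.isHermitian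
  set U : Matrix (Fin m) (Fin m) ℝ := (hH.eigenvectorUnitary : Matrix (Fin m) (Fin m) ℝ) with hU
  have hdiag : (Matrix.diagonal ((RCLike.ofReal : ℝ → ℝ) ∘ hH.eigenvalues)) =
      Matrix.diagonal hH.eigenvalues := by
    congr 1
  have hspec : S = U * Matrix.diagonal hH.eigenvalues * star U := by
    rw [← hdiag, hU]; exact hH.spectral_theorem
  have hUU : U * star U = 1 := (Unitary.mem_iff.mp hH.eigenvectorUnitary.2).2
  have hdetU : LinearMap.det (conjL U) * LinearMap.det (conjL (star U)) = 1 := by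
    rw [← LinearMap.det_comp, ← conjL_mul, hUU, conjL_one, LinearMap.det_id]
  calc LinearMap.det (conjL S)
      = LinearMap.det (conjL (U * Matrix.diagonal hH.eigenvalues * star U)) := by rw [← hspec]
    _ = LinearMap.det (conjL U) * LinearMap.det (conjL (Matrix.diagonal hH.eigenvalues)) *
        LinearMap.det (conjL (star U)) := by
        rw [conjL_mul, conjL_mul, LinearMap.det_comp, LinearMap.det_comp]
    _ = LinearMap.det (conjL (Matrix.diagonal hH.eigenvalues)) := by
        rw [mul_comm (LinearMap.det (conjL U)), mul_assoc, hdetU, mul_one]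
    _ = (∏ i, hH.eigenvalues i) ^ (m + 1) := by
        rw [det_conjL_diagonal, prod_pairs _ (fun i => hS.eigenvalues_pos i)]
    _ = S.det ^ (m + 1) := by
        rw [hH.det_eq_prod_eigenvalues]; norm_num


/-- The continuous linear map `u ↦ symOf u i j`. -/
noncomputable def symProj (i j : Fin m) : SymCoord m →L[ℝ] ℝ :=
  if h : i ≤ j then ContinuousLinearMap.proj ⟨(i, j), h⟩
  else ContinuousLinearMap.proj ⟨(j, i), le_of_not_ge h⟩

lemma symProj_apply (i j : Fin m) (u : SymCoord m) : symProj i j u = symOf u i j := by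
  simp only [symProj, symOf, Matrix.of_apply]
  by_cases h : i ≤ j
  · rw [dif_pos h, dif_pos h]; rfl
  · rw [dif_neg h, dif_neg h]; rfl

lemma differentiable_symOf_entry (i j : Fin m) :
    Differentiable ℝ fun u : SymCoord m => symOf u i j := by
  intro u
  exact ((symProj (m := m) i j).differentiableAt).congr_of_eventuallyEq
    (Filter.Eventually.of_forall fun v => (symProj_apply i j v).symm)

lemma differentiable_symOf_det :
    Differentiable ℝ fun u : SymCoord m => (symOf u).det :=
  differentiable_det_of_entries fun i j => differentiable_symOf_entry i j

lemma differentiableAt_inv_entry {u₀ : SymCoord m} (h : (symOf u₀).det ≠ 0) (k j : Fin m) :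
    DifferentiableAt ℝ (fun u => (symOf u)⁻¹ k j) u₀ := by
  have heq : (fun u : SymCoord m => (symOf u)⁻¹ k j) =
      fun u => ((symOf u).det)⁻¹ * (symOf u).adjugate k j := by
    funext u
    rw [Matrix.inv_def, Ring.inverse_eq_inv, Matrix.smul_apply, smul_eq_mul]
  rw [heq]
  exact (((differentiable_symOf_det u₀).inv h).mul
    ((differentiable_adjugate_entry (fun i j => differentiable_symOf_entry i j) k j) u₀))

/-- Main derivative lemma. -/
lemma hasFDerivAt_inv_coord {u₀ : SymCoord m} (h : IsUnit (symOf u₀).det) :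
    HasFDerivAt (fun u : SymCoord m => coordOf ((symOf u)⁻¹))
      (LinearMap.toContinuousLinearMap (-(conjL ((symOf u₀)⁻¹)))) u₀ := by
  set S := symOf u₀ with hSdef
  have hdet : S.det ≠ 0 := by
    intro h0; rw [h0] at h; simpa using h.ne_zero
  -- differentiability of entries of the inverse
  have hdiff : ∀ k j : Fin m, DifferentiableAt ℝ (fun u => (symOf u)⁻¹ k j) u₀ :=
    differentiableAt_inv_entry hdet
  set g' : Fin m → Fin m → (SymCoord m →L[ℝ] ℝ) :=
    fun k j => fderiv ℝ (fun u => (symOf u)⁻¹ k j) u₀ with hg'def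
  have hg' : ∀ k j, HasFDerivAt (fun u => (symOf u)⁻¹ k j) (g' k j) u₀ :=
    fun k j => (hdiff k j).hasFDerivAt
  -- eventually, symOf u * (symOf u)⁻¹ = 1
  have hopen : IsOpen {u : SymCoord m | (symOf u).det ≠ 0} :=
    isOpen_compl_singleton.preimage (continuous_symOf.matrix_det)
  have hev : ∀ᶠ u in nhds u₀, ∀ i j : Fin m,
      ∑ k, symOf u i k * (symOf u)⁻¹ k j = (1 : Matrix (Fin m) (Fin m) ℝ) i j := by
    filter_upwards [hopen.mem_nhds hdet] with u hu i j
    rw [← Matrix.mul_apply, Matrix.mul_nonsing_inv _ (isUnit_iff_ne_zero.mpr hu)]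
  -- the derivative of the constant ∑ k, symOf u i k * inv k j is zero
  have hzero : ∀ i j : Fin m,
      (∑ k, ((symOf u₀)⁻¹ k j • symProj i k + S i k • g' k j)) = 0 := by
    intro i j
    have hprod : HasFDerivAt (fun u : SymCoord m => ∑ k, symOf u i k * (symOf u)⁻¹ k j)
        (∑ k, ((symOf u₀)⁻¹ k j • symProj i k + S i k • g' k j)) u₀ := by
      refine HasFDerivAt.fun_sum fun k _ => ?_
      have h1 : HasFDerivAt (fun u : SymCoord m => symOf u i k) (symProj i k) u₀ := by
        refine HasFDerivAt.congr_fderiv ((symProj i k).hasFDerivAt) rfl |>.congr_of_eventuallyEq ?_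
        filter_upwards with u using (symProj_apply i k u).symm
      have := h1.fun_mul (hg' k j)
      simpa [hSdef, symProj_apply, add_comm] using this
    have hconst : HasFDerivAt (fun u : SymCoord m => ∑ k, symOf u i k * (symOf u)⁻¹ k j)
        (0 : SymCoord m →L[ℝ] ℝ) u₀ := by
      have h1 : HasFDerivAt (fun _ : SymCoord m => (1 : Matrix (Fin m) (Fin m) ℝ) i j)
          (0 : SymCoord m →L[ℝ] ℝ) u₀ := hasFDerivAt_const _ _
      refine h1.congr_of_eventuallyEq ?_
      filter_upwards [hev] with u hu using (hu i j)
    exact hprod.unique hconst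
  -- matrix form: S * (g' · X) = -(symOf X * S⁻¹)
  have hmat : ∀ X : SymCoord m,
      (Matrix.of fun k j => g' k j X) = -(S⁻¹ * symOf X * S⁻¹) := by
    intro X
    have hSg : S * (Matrix.of fun k j => g' k j X) = -(symOf X * S⁻¹) := by
      ext i j
      have := congrArg (fun L : SymCoord m →L[ℝ] ℝ => L X) (hzero i j)
      simp only [ContinuousLinearMap.coe_sum', Finset.sum_apply, ContinuousLinearMap.add_apply,
        ContinuousLinearMap.coe_smul', Pi.smul_apply, smul_eq_mul,
        ContinuousLinearMap.zero_apply, symProj_apply] at this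
      rw [Matrix.mul_apply, Matrix.neg_apply, Matrix.mul_apply]
      simp only [Matrix.of_apply]
      have hsplit : ∑ k, ((symOf u₀)⁻¹ k j * symOf X i k + S i k * g' k j X) = 0 := this
      rw [Finset.sum_add_distrib] at hsplit
      have : ∑ k, S i k * g' k j X = -∑ k, (symOf u₀)⁻¹ k j * symOf X i k := by linarith
      rw [this, ← Finset.sum_neg_distrib, ← Finset.sum_neg_distrib]
      congr 1; funext k; rw [← hSdef]; ring
    calc (Matrix.of fun k j => g' k j X)
        = S⁻¹ * (S * (Matrix.of fun k j => g' k j X)) := by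
          rw [← Matrix.mul_assoc, Matrix.nonsing_inv_mul _ h, Matrix.one_mul]
      _ = -(S⁻¹ * symOf X * S⁻¹) := by rw [hSg]; rw [Matrix.mul_neg, Matrix.mul_assoc]
  -- conclude componentwise
  apply hasFDerivAt_pi''
  intro p
  have hmain := hg' p.1.1 p.1.2
  refine hmain.congr_fderiv ?_
  apply ContinuousLinearMap.ext
  intro X
  have h1 : g' p.1.1 p.1.2 X = (Matrix.of fun k j => g' k j X) p.1.1 p.1.2 := rfl
  rw [ContinuousLinearMap.comp_apply, ContinuousLinearMap.proj_apply,
    LinearMap.coe_toContinuousLinearMap', LinearMap.neg_apply, conjL_apply]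
  have hSinvT : (S⁻¹)ᵀ = S⁻¹ := by
    rw [Matrix.transpose_nonsing_inv, symOf_transpose]
  rw [hSinvT, h1, hmat X]
  simp [coordOf]

lemma posDef_iff_of_hermitian {M : Matrix (Fin m) (Fin m) ℝ} (hH : M.IsHermitian) :
    M.PosDef ↔ M.PosSemidef ∧ M.det ≠ 0 := by
  constructor
  · exact fun h => ⟨h.posSemidef, h.det_pos.ne'⟩
  · rintro ⟨hsd, hdet⟩
    refine posDef_iff_dotProduct_mulVec.mpr ⟨hH, fun x hx => ?_⟩
    rcases lt_or_eq_of_le ((posSemidef_iff_dotProduct_mulVec.mp hsd).2 x) with h | h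
    · exact h
    · exfalso
      have h0 : M *ᵥ x = 0 := (hsd.dotProduct_mulVec_zero_iff x).mp h.symm
      have hinj : Function.Injective (M.mulVec) :=
        Matrix.mulVec_injective_iff_isUnit.mpr
          ((Matrix.isUnit_iff_isUnit_det M).mpr (isUnit_iff_ne_zero.mpr hdet))
      exact hx (hinj (by simpa using h0))

lemma measurableSet_posDef :
    MeasurableSet {u : SymCoord m | (symOf u).PosDef} := by
  have heq : {u : SymCoord m | (symOf u).PosDef} =
      {u : SymCoord m | (symOf u).PosSemidef} ∩ {u : SymCoord m | (symOf u).det ≠ 0} := by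
    ext u
    simp only [Set.mem_setOf_eq, Set.mem_inter_iff]
    exact posDef_iff_of_hermitian (symOf_isHermitian u)
  rw [heq]
  refine MeasurableSet.inter ?_ ?_
  · have : {u : SymCoord m | (symOf u).PosSemidef} =
        ⋂ x : Fin m → ℝ, {u : SymCoord m | 0 ≤ star x ⬝ᵥ (symOf u *ᵥ x)} := by
      ext u
      simp only [Set.mem_setOf_eq, Set.mem_iInter]
      exact ⟨fun h x => (posSemidef_iff_dotProduct_mulVec.mp h).2 x, fun h => posSemidef_iff_dotProduct_mulVec.mpr ⟨symOf_isHermitian u, h⟩⟩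
    rw [this]
    refine IsClosed.measurableSet (isClosed_iInter fun x => ?_)
    have hc : Continuous fun u : SymCoord m => star x ⬝ᵥ (symOf u *ᵥ x) :=
      (continuous_const).dotProduct ((continuous_symOf).matrix_mulVec continuous_const)
    exact isClosed_le continuous_const hc
  · exact (isOpen_compl_singleton.preimage continuous_symOf.matrix_det).measurableSet

lemma measurable_entry (i j : Fin m) : Measurable fun A : Matrix (Fin m) (Fin m) ℝ => A i j := by
  exact Measurable.comp (measurable_pi_apply j) (measurable_pi_apply i)

lemma measurable_matrix_inv : Measurable fun s : Matrix (Fin m) (Fin m) ℝ => s⁻¹ := by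
  have heq : (fun s : Matrix (Fin m) (Fin m) ℝ => s⁻¹) =
      fun s => Matrix.of fun i j => (s.det)⁻¹ * s.adjugate i j := by
    funext s
    ext i j
    rw [Matrix.inv_def, Ring.inverse_eq_inv, Matrix.smul_apply, smul_eq_mul, Matrix.of_apply]
  rw [heq]
  refine measurable_pi_lambda _ fun i => measurable_pi_lambda _ fun j => ?_
  exact ((measurable_det_of_entries measurable_entry).inv).mul
    (measurable_adjugate_entry measurable_entry i j)

lemma bijOn_inv_posDef :
    Set.BijOn (fun s : Matrix (Fin m) (Fin m) ℝ => s⁻¹) {r | r.PosDef} {r | r.PosDef} := by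
  have hinv2 : ∀ r : Matrix (Fin m) (Fin m) ℝ, r.PosDef → r⁻¹⁻¹ = r := fun r hr =>
    Matrix.nonsing_inv_nonsing_inv _ hr.det_pos.ne'.isUnit
  refine ⟨fun r hr => hr.inv, fun r hr s hs h => ?_, fun r hr => ⟨r⁻¹, hr.inv, hinv2 r hr⟩⟩
  calc r = r⁻¹⁻¹ := (hinv2 r hr).symm
    _ = s⁻¹⁻¹ := by simp only at h; rw [h]
    _ = s := hinv2 s hs

lemma symOf_inv_transpose {u : SymCoord m} : ((symOf u)⁻¹)ᵀ = (symOf u)⁻¹ := by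
  rw [Matrix.transpose_nonsing_inv, symOf_transpose]

lemma symOf_phi (u : SymCoord m) : symOf (coordOf ((symOf u)⁻¹)) = (symOf u)⁻¹ :=
  symOf_coordOf symOf_inv_transpose

theorem integral_cone_inverse' (m : ℕ) (f : Matrix (Fin m) (Fin m) ℝ → ℝ) :
    (∫ u : SymCoord m,
        if (symOf u).PosDef then f ((symOf u)⁻¹) * (|(symOf u).det| ^ (m + 1))⁻¹ else 0) =
      ∫ u : SymCoord m, if (symOf u).PosDef then f (symOf u) else 0 := by
  classical
  set P : Set (SymCoord m) := {u | (symOf u).PosDef} with hPdef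
  set Φ : SymCoord m → SymCoord m := fun u => coordOf ((symOf u)⁻¹) with hΦdef
  set D : SymCoord m → (SymCoord m →L[ℝ] SymCoord m) :=
    fun u => LinearMap.toContinuousLinearMap (-(conjL ((symOf u)⁻¹))) with hDdef
  have hP : MeasurableSet P := measurableSet_posDef
  have hΦP : ∀ u ∈ P, Φ u ∈ P := by
    intro u hu
    have : (symOf (Φ u)).PosDef := by rw [hΦdef]; rw [symOf_phi]; exact hu.inv
    exact this
  have hΦΦ : ∀ u ∈ P, Φ (Φ u) = u := by
    intro u hu
    show coordOf ((symOf (coordOf ((symOf u)⁻¹)))⁻¹) = u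
    rw [symOf_phi, Matrix.nonsing_inv_nonsing_inv _ hu.det_pos.ne'.isUnit, coordOf_symOf]
  have hinj : Set.InjOn Φ P := by
    intro u hu v hv h
    have h2 : (symOf u)⁻¹ = (symOf v)⁻¹ := by
      have := congrArg symOf h
      rwa [hΦdef, symOf_phi, symOf_phi] at this
    have h3 : symOf u = symOf v := by
      rw [← Matrix.nonsing_inv_nonsing_inv (symOf u) hu.det_pos.ne'.isUnit, h2,
        Matrix.nonsing_inv_nonsing_inv _ hv.det_pos.ne'.isUnit]
    rw [← coordOf_symOf u, h3, coordOf_symOf]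
  have himg : Φ '' P = P := by
    apply Set.Subset.antisymm
    · rintro r ⟨u, hu, rfl⟩; exact hΦP u hu
    · intro r hr
      exact ⟨Φ r, hΦP r hr, hΦΦ r hr⟩
  have hderiv : ∀ u ∈ P, HasFDerivWithinAt Φ (D u) P u := fun u hu =>
    (hasFDerivAt_inv_coord hu.det_pos.ne'.isUnit).hasFDerivWithinAt
  have hcov := integral_image_eq_integral_abs_det_fderiv_smul volume hP hderiv hinj
    (fun r => f (symOf r))
  rw [himg] at hcov
  -- identify the Jacobian factor
  have hjac : ∀ u ∈ P, |(D u).det| = (|(symOf u).det| ^ (m + 1))⁻¹ := by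
    intro u hu
    have hdet0 : (symOf u).det ≠ 0 := hu.det_pos.ne'
    have h1 : (D u).det = LinearMap.det (-(conjL ((symOf u)⁻¹))) := by
      rw [hDdef]
      simp only [ContinuousLinearMap.det]
      rw [LinearMap.coe_toContinuousLinearMap]
    rw [h1, ← neg_one_smul ℝ (conjL ((symOf u)⁻¹)), LinearMap.det_smul,
      det_conjL_posDef hu.inv]
    rw [abs_mul, abs_pow, abs_neg, abs_one, one_pow, one_mul, Matrix.det_nonsing_inv,
      Ring.inverse_eq_inv, abs_pow, abs_inv, inv_pow]
  -- final rewriting of both sides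
  have hind1 : (fun u : SymCoord m =>
      if (symOf u).PosDef then f ((symOf u)⁻¹) * (|(symOf u).det| ^ (m + 1))⁻¹ else 0) =
      P.indicator (fun u => f ((symOf u)⁻¹) * (|(symOf u).det| ^ (m + 1))⁻¹) := by
    funext u
    by_cases h : (symOf u).PosDef
    · rw [if_pos h]; exact (Set.indicator_of_mem (show u ∈ P from h)
        (fun u => f ((symOf u)⁻¹) * (|(symOf u).det| ^ (m + 1))⁻¹)).symm
    · rw [if_neg h]; exact (Set.indicator_of_notMem (show u ∉ P from h)
        (fun u => f ((symOf u)⁻¹) * (|(symOf u).det| ^ (m + 1))⁻¹)).symm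
  have hind2 : (fun u : SymCoord m => if (symOf u).PosDef then f (symOf u) else 0) =
      P.indicator (fun u => f (symOf u)) := by
    funext u
    by_cases h : (symOf u).PosDef
    · rw [if_pos h]; exact (Set.indicator_of_mem (show u ∈ P from h)
        (fun u => f (symOf u))).symm
    · rw [if_neg h]; exact (Set.indicator_of_notMem (show u ∉ P from h)
        (fun u => f (symOf u))).symm
  rw [hind1, hind2, integral_indicator hP, integral_indicator hP, hcov]
  refine setIntegral_congr_fun hP fun u hu => ?_
  simp only [smul_eq_mul]
  rw [hjac u hu, hΦdef]
  simp only []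
  rw [symOf_phi]
  ring

end SiegelAux

/-- `s ↦ s⁻¹` is a measurable bijection of the cone `P_m` of positive definite
symmetric matrices onto itself, and under `r = s⁻¹` the measure transforms as
`dr = |det s|^{-(m+1)} ds`: `∫_{P_m} f(s⁻¹) |det s|^{-(m+1)} ds = ∫_{P_m} f(r) dr`. -/
theorem integral_cone_inverse (m : ℕ) (f : Matrix (Fin m) (Fin m) ℝ → ℝ)
    (hf : Integrable (fun u : SymCoord m => if (symOf u).PosDef then f (symOf u) else 0)) :
    Measurable (fun s : Matrix (Fin m) (Fin m) ℝ => s⁻¹) ∧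
    Set.BijOn (fun s : Matrix (Fin m) (Fin m) ℝ => s⁻¹)
      {r | r.PosDef} {r | r.PosDef} ∧
    (∫ u : SymCoord m,
        if (symOf u).PosDef then f ((symOf u)⁻¹) * (|(symOf u).det| ^ (m + 1))⁻¹ else 0) =
      ∫ u : SymCoord m, if (symOf u).PosDef then f (symOf u) else 0 :=
  ⟨SiegelAux.measurable_matrix_inv, SiegelAux.bijOn_inv_posDef,
    SiegelAux.integral_cone_inverse' m f⟩
end

section
/- If f is a continuous function on M_{n,m} satisfying f(x) = O(‖x‖^{-a}) with a > km, where ‖x‖ = (tr(x'x))^{1/2}, then the matrix k-plane Radon transform f̂(ξ,t) = ∫_{M_{k,m}} f(g_ξ [u;t]) du is finite for all ξ ∈ V_{n,n-k} and all t ∈ M_{n-k,m}. -/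
open MeasureTheory Matrix

/-- The distinguished frame `ξ₀ = [0; I_{n-k}] ∈ V_{n,n-k}`, with `n = k + l`
realized through the index type `Fin k ⊕ Fin l`. -/
def xi0 (k l : ℕ) : Matrix (Fin k ⊕ Fin l) (Fin l) ℝ := Matrix.fromRows 0 1

/-- The trace of `xᵀ * x` is the sum of the squares of the entries of `x`. -/
lemma trace_tr_mul_self {p q : Type*} [Fintype p] [Fintype q]
    (x : Matrix p q ℝ) : (xᵀ * x).trace = ∑ j, ∑ i, x i j ^ 2 := by
  simp [Matrix.trace, Matrix.mul_apply, Matrix.diag, sq]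

lemma trace_tr_mul_self_nonneg {p q : Type*} [Fintype p] [Fintype q]
    (x : Matrix p q ℝ) : 0 ≤ (xᵀ * x).trace := by
  rw [trace_tr_mul_self]; positivity

/-- Each entry of `x` is bounded in absolute value by `√(tr(xᵀx))`. -/
lemma abs_entry_le_sqrt_trace {p q : Type*} [Fintype p] [Fintype q]
    (x : Matrix p q ℝ) (i : p) (j : q) : |x i j| ≤ Real.sqrt ((xᵀ * x).trace) := by
  rw [← Real.sqrt_sq_eq_abs]
  apply Real.sqrt_le_sqrt
  rw [trace_tr_mul_self]
  calc x i j ^ 2 ≤ ∑ i', x i' j ^ 2 :=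
        Finset.single_le_sum (f := fun i' => x i' j ^ 2)
          (fun _ _ => sq_nonneg _) (Finset.mem_univ i)
    _ ≤ ∑ j', ∑ i', x i' j' ^ 2 :=
        Finset.single_le_sum (f := fun j' => ∑ i', x i' j' ^ 2)
          (fun _ _ => Finset.sum_nonneg fun _ _ => sq_nonneg _) (Finset.mem_univ j)

/-- if `f` is continuous on `M_{n,m}` (`n = k + l`) with
`f(x) = O(‖x‖^{-a})`, `a > km`, where `‖x‖ = (tr x'x)^{1/2}` is the Frobenius norm, then
the matrix `k`-plane Radon transform `f̂(ξ,t) = ∫ f(g [u;t]) du` is finite for all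
frames `ξ ∈ V_{n,n-k}` and all `t ∈ M_{n-k,m}`. -/
theorem radon_transform_continuous (k l m : ℕ) (hk : 0 < k) (hl : 0 < l)
    (f : Matrix (Fin k ⊕ Fin l) (Fin m) ℝ → ℝ) (hf : Continuous f)
    (C a : ℝ) (ha : (k * m : ℝ) < a)
    (hbound : ∀ x, |f x| ≤ C * (1 + Real.sqrt (xᵀ * x).trace) ^ (-a)) :
    ∀ (ξ : Matrix (Fin k ⊕ Fin l) (Fin l) ℝ), ξᵀ * ξ = 1 →
    ∀ (g : Matrix (Fin k ⊕ Fin l) (Fin k ⊕ Fin l) ℝ),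
      gᵀ * g = 1 → g.det = 1 → g * xi0 k l = ξ →
    ∀ t : Matrix (Fin l) (Fin m) ℝ,
      Integrable fun u : Matrix (Fin k) (Fin m) ℝ => f (g * Matrix.fromRows u t) := by
  intro ξ hξ g hg hgdet hgξ t
  -- transfer the statement to the pi type `Fin k → Fin m → ℝ`
  show Integrable
    (fun u : Fin k → Fin m → ℝ => f (g * Matrix.fromRows (Matrix.of u) t)) volume
  -- the dominating function
  set B : (Fin k → Fin m → ℝ) → ℝ := fun u => |C| * (1 + ‖u‖) ^ (-a) with hBdef
  have hBint : Integrable B := by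
    apply Integrable.const_mul
    apply integrable_one_add_norm (E := Fin k → Fin m → ℝ)
    rw [Module.finrank_pi_fintype]
    simpa [Module.finrank_pi] using ha
  -- continuity, hence measurability
  have hcont : Continuous
      fun u : Fin k → Fin m → ℝ => f (g * Matrix.fromRows (Matrix.of u) t) := by
    apply hf.comp
    apply Continuous.matrix_mul continuous_const
    apply continuous_pi; intro i; apply continuous_pi; intro j
    cases i with
    | inl i =>
      simpa [Matrix.fromRows_apply_inl, Function.comp_def] using (continuous_apply j).comp
        (continuous_apply (A := fun _ : Fin k => Fin m → ℝ) i)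
    | inr i => simpa [Matrix.fromRows_apply_inr] using continuous_const
  refine Integrable.mono (g := B) hBint hcont.aestronglyMeasurable ?_
  refine Filter.Eventually.of_forall fun u => ?_
  set M : Matrix (Fin k ⊕ Fin l) (Fin m) ℝ := g * Matrix.fromRows (Matrix.of u) t with hM
  -- the trace identity
  have htr : (Mᵀ * M).trace = ((Matrix.of u)ᵀ * Matrix.of u).trace + (tᵀ * t).trace := by
    rw [hM, Matrix.transpose_mul, Matrix.mul_assoc, ← Matrix.mul_assoc gᵀ, hg,
      Matrix.one_mul, Matrix.transpose_fromRows, Matrix.fromCols_mul_fromRows,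
      Matrix.trace_add]
  -- the (sup) norm of `u` is bounded by the Frobenius norm
  have hnorm_le : ‖u‖ ≤ Real.sqrt (((Matrix.of u)ᵀ * Matrix.of u).trace) := by
    have h0 : (0:ℝ) ≤ Real.sqrt (((Matrix.of u)ᵀ * Matrix.of u).trace) := Real.sqrt_nonneg _
    rw [pi_norm_le_iff_of_nonneg h0]
    intro i
    rw [pi_norm_le_iff_of_nonneg h0]
    intro j
    simpa [Real.norm_eq_abs] using abs_entry_le_sqrt_trace (Matrix.of u) i j
  have h1u : (0:ℝ) < 1 + ‖u‖ := by positivity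
  have hle : 1 + ‖u‖ ≤ 1 + Real.sqrt ((Mᵀ * M).trace) := by
    rw [htr]
    have h2 : Real.sqrt (((Matrix.of u)ᵀ * Matrix.of u).trace) ≤
        Real.sqrt (((Matrix.of u)ᵀ * Matrix.of u).trace + (tᵀ * t).trace) :=
      Real.sqrt_le_sqrt (by linarith [trace_tr_mul_self_nonneg t])
    linarith
  have hpow : (1 + Real.sqrt ((Mᵀ * M).trace)) ^ (-a) ≤ (1 + ‖u‖) ^ (-a) := by
    have ha0 : (0:ℝ) < a := lt_of_le_of_lt (by positivity) ha
    exact Real.rpow_le_rpow_of_nonpos h1u hle (by linarith)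
  have hchain : |f M| ≤ |C| * (1 + ‖u‖) ^ (-a) := by
    refine le_trans (hbound M) ?_
    calc C * (1 + Real.sqrt ((Mᵀ * M).trace)) ^ (-a)
        ≤ |C| * (1 + Real.sqrt ((Mᵀ * M).trace)) ^ (-a) := by
          apply mul_le_mul_of_nonneg_right (le_abs_self C); positivity
      _ ≤ |C| * (1 + ‖u‖) ^ (-a) := mul_le_mul_of_nonneg_left hpow (abs_nonneg C)
  have hBnonneg : 0 ≤ B u := by rw [hBdef]; positivity
  rw [Real.norm_eq_abs, Real.norm_eq_abs, abs_of_nonneg hBnonneg]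
  exact hchain
end

section
/- Central Slice Theorem for matrix Radon transforms: let f ∈ L¹(M_{n,m}) with n-k ≥ m. If y ∈ M_{n,m}, ξ ∈ V_{n,n-k} is an orthonormal frame spanning an (n-k)-dimensional subspace containing the column span of y, and b ∈ M_{n-k,m} satisfies y = ξ b, then the Fourier transform (ℱf)(y) = ∫ exp(i tr(y'x)) f(x) dx equals ∫_{M_{n-k,m}} exp(i tr(b't)) f̂(ξ,t) dt; i.e., (ℱf)(ξb) = ℱ[f̂(ξ,·)](b). -/
open MeasureTheory Matrix

section aux
variable {n m : Type*} [Fintype n] [DecidableEq n] [Fintype m]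

lemma trace_transpose_mul_self (A : Matrix n m ℝ) :
    (Aᵀ * A).trace = ∑ i, ∑ j, A i j ^ 2 := by
  simp only [Matrix.trace, Matrix.mul_apply, Matrix.diag, Matrix.transpose_apply, sq]
  rw [Finset.sum_comm]

/-- Left multiplication by an orthogonal matrix, as a linear equivalence. -/
noncomputable def mulLeftEquiv (g : Matrix n n ℝ) (hg : gᵀ * g = 1) :
    ((n → m → ℝ) ≃ₗ[ℝ] (n → m → ℝ)) where
  toFun x := (g * (Matrix.of x) : Matrix n m ℝ)
  invFun x := (gᵀ * (Matrix.of x) : Matrix n m ℝ)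
  left_inv x := by
    show ((gᵀ * (g * Matrix.of x) : Matrix n m ℝ) : n → m → ℝ) = x
    rw [← Matrix.mul_assoc, hg, Matrix.one_mul]; rfl
  right_inv x := by
    show ((g * (gᵀ * Matrix.of x) : Matrix n m ℝ) : n → m → ℝ) = x
    rw [← Matrix.mul_assoc, mul_eq_one_comm.mp hg, Matrix.one_mul]; rfl
  map_add' x y := by
    show ((g * (Matrix.of x + Matrix.of y) : Matrix n m ℝ) : n → m → ℝ) = _
    rw [Matrix.mul_add]; rfl
  map_smul' c x := by
    show ((g * (c • Matrix.of x) : Matrix n m ℝ) : n → m → ℝ) = _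
    rw [Matrix.mul_smul]; rfl

lemma measurePreserving_mulLeft_pi (g : Matrix n n ℝ) (hg : gᵀ * g = 1) :
    MeasurePreserving (fun x : n → m → ℝ => ((g * (Matrix.of x) : Matrix n m ℝ) : n → m → ℝ))
      volume volume := by
  classical
  set L := (mulLeftEquiv g hg : (n → m → ℝ) ≃ₗ[ℝ] (n → m → ℝ)) with hL
  have hLcont : Continuous L := L.toLinearMap.continuous_of_finiteDimensional
  have hLmeas : Measurable L := hLcont.measurable
  haveI : (volume.map (L : (n → m → ℝ) ≃ₗ[ℝ] (n → m → ℝ))).IsAddHaarMeasure :=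
    Measure.MapLinearEquiv.isAddHaarMeasure _ L
  haveI : (volume : Measure (n → m → ℝ)).IsAddHaarMeasure := Measure.pi.isAddHaarMeasure _
  have key : volume.map L =
      Measure.addHaarScalarFactor (volume.map L) volume • volume :=
    Measure.isAddLeftInvariant_eq_smul _ _
  -- evaluate on the Frobenius unit ball
  set S : Set (n → m → ℝ) := {x | ∑ i, ∑ j, x i j ^ 2 ≤ 1} with hS
  have hmeas_sum : Measurable fun x : n → m → ℝ => ∑ i, ∑ j, x i j ^ 2 := by
    apply Finset.measurable_sum
    intro i _
    apply Finset.measurable_sum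
    intro j _
    exact ((measurable_pi_apply j).comp (measurable_pi_apply i)).pow_const 2
  have hSm : MeasurableSet S := measurableSet_le hmeas_sum measurable_const
  have hpre : L ⁻¹' S = S := by
    ext x
    have : ∑ i, ∑ j, (g * Matrix.of x : Matrix n m ℝ) i j ^ 2 = ∑ i, ∑ j, Matrix.of x i j ^ 2 := by
      rw [← trace_transpose_mul_self, ← trace_transpose_mul_self, Matrix.transpose_mul,
        Matrix.mul_assoc, ← Matrix.mul_assoc gᵀ, hg, Matrix.one_mul]
    simp only [S, Set.mem_preimage, Set.mem_setOf_eq]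
    change (∑ i, ∑ j, (g * Matrix.of x : Matrix n m ℝ) i j ^ 2 ≤ 1) ↔ _
    rw [this]
    exact Iff.rfl
  -- positivity of the measure of S
  have h0 : volume S ≠ 0 := by
    have hU : IsOpen {x : n → m → ℝ | ∑ i, ∑ j, x i j ^ 2 < 1} := by
      apply isOpen_lt _ continuous_const
      fun_prop
    have hUS : {x : n → m → ℝ | ∑ i, ∑ j, x i j ^ 2 < 1} ⊆ S := by
      intro x hx
      have hx' : ∑ i, ∑ j, x i j ^ 2 < 1 := hx
      exact le_of_lt hx'
    have hpos : 0 < volume {x : n → m → ℝ | ∑ i, ∑ j, x i j ^ 2 < 1} :=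
      hU.measure_pos volume ⟨0, by simp⟩
    exact fun h => absurd (measure_mono_null hUS h) hpos.ne'
  -- finiteness of the measure of S
  have hfin : volume S ≠ ⊤ := by
    have hsub : S ⊆ Set.univ.pi fun _ : n => Set.univ.pi fun _ : m => Set.Icc (-1 : ℝ) 1 := by
      intro x hx
      intro i _
      intro j _
      have h1 : x i j ^ 2 ≤ ∑ i, ∑ j, x i j ^ 2 := by
        have h2 : x i j ^ 2 ≤ ∑ j, x i j ^ 2 :=
          Finset.single_le_sum (fun j _ => sq_nonneg (x i j)) (Finset.mem_univ j)
        exact h2.trans (Finset.single_le_sum (f := fun i => ∑ j, x i j ^ 2)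
          (fun i _ => Finset.sum_nonneg fun j _ => sq_nonneg (x i j)) (Finset.mem_univ i))
      have : x i j ^ 2 ≤ 1 := h1.trans hx
      have : |x i j| ≤ 1 := by nlinarith [abs_nonneg (x i j), sq_abs (x i j)]
      exact abs_le.mp this
    refine ne_top_of_le_ne_top ?_ (measure_mono hsub)
    rw [volume_pi, Measure.pi_pi]
    simp only [volume_pi, Measure.pi_pi, Real.volume_Icc]
    exact ENNReal.prod_ne_top fun i _ => ENNReal.prod_ne_top fun j _ => ENNReal.ofReal_ne_top
  -- conclude the scalar factor is 1
  have hmapS : volume.map L S = volume S := by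
    rw [Measure.map_apply hLmeas hSm, hpre]
  have hfact : (Measure.addHaarScalarFactor (volume.map L) volume : ENNReal) = 1 := by
    have h1 : volume S = (Measure.addHaarScalarFactor (volume.map L) volume : ENNReal) * volume S := by
      conv_lhs => rw [← hmapS, key]
      rw [Measure.smul_apply, ENNReal.smul_def, smul_eq_mul]
    have := h1.symm
    rwa [ENNReal.mul_eq_right h0 hfin] at this
  have hmapeq : volume.map L = volume := by
    rw [key, ENNReal.smul_def, hfact, one_smul]
  exact ⟨hLmeas, hmapeq⟩



/-- Left multiplication by an orthogonal matrix as a measurable equivalence. -/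
noncomputable def mulLeftMeasurableEquiv (g : Matrix n n ℝ) (hg : gᵀ * g = 1) :
    ((n → m → ℝ) ≃ᵐ (n → m → ℝ)) where
  toEquiv := (mulLeftEquiv (m := m) g hg).toEquiv
  measurable_toFun :=
    (mulLeftEquiv (m := m) g hg).toLinearMap.continuous_of_finiteDimensional.measurable
  measurable_invFun :=
    (mulLeftEquiv (m := m) g hg).symm.toLinearMap.continuous_of_finiteDimensional.measurable

lemma measurable_traceForm (w : Matrix n m ℝ) :
    Measurable fun x : n → m → ℝ => ((wᵀ * Matrix.of x : Matrix m m ℝ)).trace := by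
  simp only [Matrix.trace, Matrix.diag, Matrix.mul_apply, Matrix.transpose_apply]
  refine Finset.measurable_sum _ fun j _ => Finset.measurable_sum _ fun i _ => ?_
  have h : Measurable fun x : n → m → ℝ => x i j :=
    (measurable_pi_apply j).comp (measurable_pi_apply i)
  exact h.const_mul _

lemma norm_exp_I_mul (r : ℝ) : ‖Complex.exp (Complex.I * r)‖ = 1 := by
  rw [mul_comm]
  exact Complex.norm_exp_ofReal_mul_I r

end aux

set_option maxHeartbeats 1000000 in
/-- Central Slice Theorem: let `f ∈ L¹(M_{n,m})`, `n - k ≥ m`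
(`n = k + l`, `m ≤ l`). If `ξ ∈ V_{n,n-k}` and `b ∈ M_{n-k,m}` satisfy `y = ξ b`, then
`(ℱf)(y) = ∫_{M_{n-k,m}} exp(i tr(b't)) f̂(ξ,t) dt`, where
`(ℱf)(y) = ∫ exp(i tr(y'x)) f(x) dx` and `f̂(ξ,t) = ∫ f(g [u;t]) du`, `g ∈ SO(n)`,
`g ξ₀ = ξ`. -/
theorem central_slice (k l m : ℕ) (hlm : m ≤ l)
    (f : Matrix (Fin k ⊕ Fin l) (Fin m) ℝ → ℂ) (hf : Integrable f)
    (ξ : Matrix (Fin k ⊕ Fin l) (Fin l) ℝ) (hξ : ξᵀ * ξ = 1)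
    (g : Matrix (Fin k ⊕ Fin l) (Fin k ⊕ Fin l) ℝ)
    (hg : gᵀ * g = 1) (hgdet : g.det = 1) (hgξ : g * xi0 k l = ξ)
    (b : Matrix (Fin l) (Fin m) ℝ) (y : Matrix (Fin k ⊕ Fin l) (Fin m) ℝ)
    (hy : y = ξ * b) :
    (∫ x : Matrix (Fin k ⊕ Fin l) (Fin m) ℝ,
        Complex.exp (Complex.I * ((yᵀ * x).trace : ℂ)) * f x) =
      ∫ t : Matrix (Fin l) (Fin m) ℝ,
        Complex.exp (Complex.I * ((bᵀ * t).trace : ℂ)) *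
          ∫ u : Matrix (Fin k) (Fin m) ℝ, f (g * Matrix.fromRows u t) := by
  classical
  subst hy
  set w : Matrix (Fin k ⊕ Fin l) (Fin m) ℝ := xi0 k l * b with hw
  -- key algebraic identities
  have hξg : ξᵀ * g = (xi0 k l)ᵀ := by
    rw [← hgξ, Matrix.transpose_mul, Matrix.mul_assoc, hg, Matrix.mul_one]
  have htr : ∀ x : Matrix (Fin k ⊕ Fin l) (Fin m) ℝ,
      (ξ * b)ᵀ * (g * x) = wᵀ * x := by
    intro x
    rw [Matrix.transpose_mul, Matrix.mul_assoc, ← Matrix.mul_assoc ξᵀ g x, hξg,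
      hw, Matrix.transpose_mul, Matrix.mul_assoc]
  have hxi0row : ∀ (u : Matrix (Fin k) (Fin m) ℝ) (t : Matrix (Fin l) (Fin m) ℝ),
      wᵀ * Matrix.fromRows u t = bᵀ * t := by
    intro u t
    rw [hw, Matrix.transpose_mul, Matrix.mul_assoc]
    have : (xi0 k l)ᵀ * Matrix.fromRows u t = t := by
      rw [xi0, Matrix.transpose_fromRows, Matrix.fromCols_mul_fromRows]
      simp
    rw [this]
  -- measure-preserving left multiplication by g
  have hmp : MeasurePreserving (fun x : Matrix (Fin k ⊕ Fin l) (Fin m) ℝ => g * x)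
      volume volume := measurePreserving_mulLeft_pi g hg
  have hemb : MeasurableEmbedding (fun x : Matrix (Fin k ⊕ Fin l) (Fin m) ℝ => g * x) :=
    (mulLeftMeasurableEquiv (m := Fin m) g hg).measurableEmbedding
  -- step 1: substitute x ↦ g x
  have step1 : (∫ x : Matrix (Fin k ⊕ Fin l) (Fin m) ℝ,
        Complex.exp (Complex.I * (((ξ * b)ᵀ * x).trace : ℂ)) * f x) =
      ∫ x : Matrix (Fin k ⊕ Fin l) (Fin m) ℝ,
        Complex.exp (Complex.I * ((wᵀ * x).trace : ℂ)) * f (g * x) := by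
    rw [← hmp.integral_comp hemb fun z =>
      Complex.exp (Complex.I * (((ξ * b)ᵀ * z).trace : ℂ)) * f z]
    congr 1
    funext x
    rw [htr x]
  rw [step1]
  -- integrability of the new integrand
  have hfg : Integrable (fun x : Matrix (Fin k ⊕ Fin l) (Fin m) ℝ => f (g * x)) :=
    (hmp.integrable_comp_emb hemb).mpr hf
  have hintG : Integrable (fun x : Matrix (Fin k ⊕ Fin l) (Fin m) ℝ =>
      Complex.exp (Complex.I * ((wᵀ * x).trace : ℂ)) * f (g * x)) := by
    refine hfg.bdd_mul (c := 1) ?_ (ae_of_all _ fun x => (norm_exp_I_mul _).le)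
    refine (Complex.measurable_exp.comp ?_).aestronglyMeasurable
    exact (Complex.measurable_ofReal.comp (measurable_traceForm w)).const_mul _
  -- step 2: split the domain
  set E : Matrix (Fin k ⊕ Fin l) (Fin m) ℝ ≃ᵐ
      Matrix (Fin k) (Fin m) ℝ × Matrix (Fin l) (Fin m) ℝ :=
    (MeasurableEquiv.sumPiEquivProdPi (fun _ : Fin k ⊕ Fin l => (Fin m → ℝ)) :
      Matrix (Fin k ⊕ Fin l) (Fin m) ℝ ≃ᵐ
        Matrix (Fin k) (Fin m) ℝ × Matrix (Fin l) (Fin m) ℝ) with hE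
  haveI : SigmaFinite (volume : Measure (Matrix (Fin k) (Fin m) ℝ)) :=
    inferInstanceAs (SigmaFinite (volume : Measure (Fin k → Fin m → ℝ)))
  haveI : SigmaFinite (volume : Measure (Matrix (Fin l) (Fin m) ℝ)) :=
    inferInstanceAs (SigmaFinite (volume : Measure (Fin l → Fin m → ℝ)))
  have hmpE : MeasurePreserving E.symm volume volume :=
    volume_measurePreserving_sumPiEquivProdPi_symm _
  have hEsymm : ∀ (p : Matrix (Fin k) (Fin m) ℝ × Matrix (Fin l) (Fin m) ℝ),
      (E.symm p : Matrix (Fin k ⊕ Fin l) (Fin m) ℝ) = Matrix.fromRows p.1 p.2 := by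
    intro p
    ext i j
    cases i <;> rfl
  have step2 : (∫ x : Matrix (Fin k ⊕ Fin l) (Fin m) ℝ,
        Complex.exp (Complex.I * ((wᵀ * x).trace : ℂ)) * f (g * x)) =
      ∫ p : Matrix (Fin k) (Fin m) ℝ × Matrix (Fin l) (Fin m) ℝ,
        Complex.exp (Complex.I * ((bᵀ * p.2).trace : ℂ)) * f (g * Matrix.fromRows p.1 p.2) := by
    rw [← hmpE.integral_comp E.symm.measurableEmbedding fun z =>
      Complex.exp (Complex.I * ((wᵀ * z).trace : ℂ)) * f (g * z)]
    congr 1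
    funext p
    rw [hEsymm p, hxi0row]
  rw [step2]
  -- step 3: Fubini
  have hintP : Integrable (fun p : Matrix (Fin k) (Fin m) ℝ × Matrix (Fin l) (Fin m) ℝ =>
      Complex.exp (Complex.I * ((bᵀ * p.2).trace : ℂ)) * f (g * Matrix.fromRows p.1 p.2)) := by
    have := (hmpE.integrable_comp_emb E.symm.measurableEmbedding).mpr hintG
    have heq : (fun p : Matrix (Fin k) (Fin m) ℝ × Matrix (Fin l) (Fin m) ℝ =>
        Complex.exp (Complex.I * ((bᵀ * p.2).trace : ℂ)) * f (g * Matrix.fromRows p.1 p.2)) =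
        (fun x : Matrix (Fin k ⊕ Fin l) (Fin m) ℝ =>
          Complex.exp (Complex.I * ((wᵀ * x).trace : ℂ)) * f (g * x)) ∘ E.symm := by
      funext p
      simp only [Function.comp_apply, hEsymm p, hxi0row]
    rw [heq]
    exact this
  have hprodvol : (volume : Measure (Matrix (Fin k) (Fin m) ℝ × Matrix (Fin l) (Fin m) ℝ)) =
      (volume : Measure (Matrix (Fin k) (Fin m) ℝ)).prod volume := rfl
  rw [hprodvol] at hintP ⊢
  rw [MeasureTheory.integral_prod_symm _ hintP]
  congr 1
  funext t
  simp only []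
  rw [MeasureTheory.integral_const_mul]
end

section
/- If n - k ≥ m, the matrix k-plane Radon transform f ↦ f̂ is injective on the Schwartz space S(M_{n,m}): if f̂(ξ,t) = 0 for all ξ ∈ V_{n,n-k} and all t ∈ M_{n-k,m}, then f ≡ 0. -/
open MeasureTheory Matrix

attribute [local instance] Matrix.normedAddCommGroup Matrix.normedSpace

namespace RadonAux

open scoped FourierTransform

variable {α β : Type*} [Fintype α] [Fintype β]

/-- Flattening a matrix into a vector, as a measurable equivalence. -/
def flattenME (α β : Type*) [Fintype α] [Fintype β] : (α → β → ℝ) ≃ᵐ (α × β → ℝ) where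
  toFun x p := x p.1 p.2
  invFun v a b := v (a, b)
  left_inv _ := rfl
  right_inv _ := rfl
  measurable_toFun := measurable_pi_lambda _ fun p =>
    (measurable_pi_apply p.2).comp (measurable_pi_apply p.1)
  measurable_invFun := measurable_pi_lambda _ fun a => measurable_pi_lambda _ fun b =>
    measurable_pi_apply (a, b)

theorem measurePreserving_flattenME (α β : Type*) [Fintype α] [Fintype β] :
    MeasurePreserving (flattenME α β) volume volume := by
  refine ⟨(flattenME α β).measurable, ?_⟩
  have : Measure.pi (fun _ : α × β => (volume : Measure ℝ))
      = Measure.map (flattenME α β) volume := by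
    apply Measure.pi_eq
    intro s hs
    rw [MeasurableEquiv.map_apply]
    have hpre : (flattenME α β) ⁻¹' (Set.univ.pi s) =
        Set.univ.pi fun a => Set.univ.pi fun b => s (a, b) := by
      ext x
      simp only [Set.mem_preimage, Set.mem_pi, Set.mem_univ, forall_true_left, Prod.forall]
      constructor
      · intro hx a b; exact hx a b
      · intro hx a b; exact hx a b
    rw [hpre]
    rw [show (volume : Measure (α → β → ℝ)) = Measure.pi fun _ => volume from rfl, Measure.pi_pi]
    rw [show (volume : Measure (β → ℝ)) = Measure.pi fun _ => volume from rfl]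
    simp_rw [Measure.pi_pi]
    rw [Fintype.prod_prod_type]
  exact (this.symm).trans rfl

/-- Matrices as a Euclidean space, as a measurable equivalence. -/
noncomputable def matEuclid (α β : Type*) [Fintype α] [Fintype β] :
    Matrix α β ℝ ≃ᵐ EuclideanSpace ℝ (α × β) :=
  (flattenME α β).trans (MeasurableEquiv.toLp 2 (α × β → ℝ))

theorem measurePreserving_matEuclid (α β : Type*) [Fintype α] [Fintype β] :
    MeasurePreserving (matEuclid α β) volume volume :=
  ((EuclideanSpace.volume_preserving_symm_measurableEquiv_toLp (α × β)).symm).comp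
    (measurePreserving_flattenME α β)

theorem matEuclid_apply (x : Matrix α β ℝ) (p : α × β) : matEuclid α β x p = x p.1 p.2 := rfl

theorem matEuclid_symm_apply (v : EuclideanSpace ℝ (α × β)) (a : α) (b : β) :
    (matEuclid α β).symm v a b = v (a, b) := rfl

section orth

variable [DecidableEq α]

theorem sum_col_mul_orth {g : Matrix α α ℝ} (hg : gᵀ * g = 1) (x y : Matrix α β ℝ) (j : β) :
    ∑ a, (g * x) a j * (g * y) a j = ∑ a, x a j * y a j := by
  have hx : ∀ a, (g * x) a j = g.mulVec (fun r => x r j) a := fun a => by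
    simp [Matrix.mul_apply, Matrix.mulVec, dotProduct]
  have hy : ∀ a, (g * y) a j = g.mulVec (fun r => y r j) a := fun a => by
    simp [Matrix.mul_apply, Matrix.mulVec, dotProduct]
  simp_rw [hx, hy]
  change g.mulVec (fun r => x r j) ⬝ᵥ g.mulVec (fun r => y r j) = _
  rw [Matrix.dotProduct_mulVec, ← Matrix.vecMul_transpose, Matrix.vecMul_vecMul, hg,
    Matrix.vecMul_one]
  rfl

theorem sum_mul_orth {g : Matrix α α ℝ} (hg : gᵀ * g = 1) (x y : Matrix α β ℝ) :
    ∑ p : α × β, (g * x) p.1 p.2 * (g * y) p.1 p.2 = ∑ p : α × β, x p.1 p.2 * y p.1 p.2 := by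
  rw [Fintype.sum_prod_type, Fintype.sum_prod_type]
  rw [Finset.sum_comm]
  rw [Finset.sum_comm (s := (Finset.univ : Finset α))]
  exact Finset.sum_congr rfl fun j _ => sum_col_mul_orth hg x y j

/-- Left multiplication by an orthogonal matrix, as a linear equivalence. -/
noncomputable def mulLeftLE (g : Matrix α α ℝ) (hg : gᵀ * g = 1) :
    Matrix α β ℝ ≃ₗ[ℝ] Matrix α β ℝ where
  toFun x := g * x
  invFun x := gᵀ * x
  map_add' x y := Matrix.mul_add g x y
  map_smul' c x := Matrix.mul_smul g c x
  left_inv x := by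
    show gᵀ * (g * x) = x
    rw [← Matrix.mul_assoc, hg, Matrix.one_mul]
  right_inv x := by
    show g * (gᵀ * x) = x
    rw [← Matrix.mul_assoc, mul_eq_one_comm.mp hg, Matrix.one_mul]

/-- The linear equivalence between matrices and the corresponding Euclidean space. -/
noncomputable def matLin (α β : Type*) [Fintype α] [Fintype β] :
    EuclideanSpace ℝ (α × β) ≃ₗ[ℝ] Matrix α β ℝ :=
  (WithLp.linearEquiv 2 ℝ ((α × β) → ℝ)).trans
    { toFun := fun v => Matrix.of fun a b => v (a, b)
      invFun := fun x p => x p.1 p.2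
      map_add' := fun _ _ => rfl
      map_smul' := fun _ _ => rfl
      left_inv := fun _ => rfl
      right_inv := fun _ => rfl }

/-- Left multiplication by an orthogonal matrix as a linear isometry equivalence of
Euclidean space. -/
noncomputable def mulLeftIso (g : Matrix α α ℝ) (hg : gᵀ * g = 1) :
    EuclideanSpace ℝ (α × β) ≃ₗᵢ[ℝ] EuclideanSpace ℝ (α × β) :=
  ((matLin α β).trans ((mulLeftLE (β := β) g hg).trans (matLin α β).symm)).isometryOfInner (by
    intro v w
    rw [PiLp.inner_apply, PiLp.inner_apply]
    simp only [RCLike.inner_apply, conj_trivial]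
    exact sum_mul_orth hg (matLin α β w) (matLin α β v))

theorem measurePreserving_mulLeft (g : Matrix α α ℝ) (hg : gᵀ * g = 1) :
    MeasurePreserving (fun x : Matrix α β ℝ => g * x) volume volume := by
  have H := ((measurePreserving_matEuclid α β).symm).comp
    (((mulLeftIso (β := β) g hg).measurePreserving).comp (measurePreserving_matEuclid α β))
  have hcoe : ⇑(mulLeftIso (β := β) g hg) =
      ⇑((matLin α β).trans ((mulLeftLE (β := β) g hg).trans (matLin α β).symm)) :=
    LinearEquiv.coe_isometryOfInner _ _
  have : (fun x : Matrix α β ℝ => g * x) =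
      (⇑(matEuclid α β).symm ∘ ⇑(mulLeftIso (β := β) g hg) ∘ ⇑(matEuclid α β)) := by
    funext x
    show g * x = (matEuclid α β).symm ((mulLeftIso (β := β) g hg) ((matEuclid α β) x))
    rw [congrFun hcoe ((matEuclid α β) x)]
    rfl
  rwa [this]

/-- Left multiplication by an orthogonal matrix, as a measurable equivalence. -/
noncomputable def mulLeftME (g : Matrix α α ℝ) (hg : gᵀ * g = 1) :
    Matrix α β ℝ ≃ᵐ Matrix α β ℝ where
  toEquiv := (mulLeftLE (β := β) g hg).toEquiv
  measurable_toFun := (measurePreserving_mulLeft (β := β) g hg).measurable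
  measurable_invFun := by
    have hg' : gᵀᵀ * gᵀ = 1 := by
      rw [Matrix.transpose_transpose, mul_eq_one_comm.mp hg]
    exact (measurePreserving_mulLeft (β := β) gᵀ hg').measurable

end orth

theorem exists_rotation (k l m : ℕ) (hl : 0 < l) (hlm : m ≤ l)
    (y : Matrix (Fin k ⊕ Fin l) (Fin m) ℝ) :
    ∃ (g : Matrix (Fin k ⊕ Fin l) (Fin k ⊕ Fin l) ℝ) (s : Matrix (Fin l) (Fin m) ℝ),
      gᵀ * g = 1 ∧ g.det = 1 ∧ y = g * Matrix.fromRows 0 s := by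
  classical
  set E' := EuclideanSpace ℝ (Fin k ⊕ Fin l) with hE'
  let cols : Fin m → E' := fun c => WithLp.toLp 2 (fun r => y r c : Fin k ⊕ Fin l → ℝ)
  let V : Submodule ℝ E' := Submodule.span ℝ (Set.range cols)
  have hVm : Module.finrank ℝ V ≤ m := by
    refine le_trans (finrank_span_le_card _) ?_
    rw [Set.toFinset_range]
    exact Finset.card_image_le.trans (by simp)
  have hdim : Module.finrank ℝ E' = k + l := by
    show Module.finrank ℝ (EuclideanSpace ℝ (Fin k ⊕ Fin l)) = k + l
    simp [finrank_euclideanSpace]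
  have hkW : k ≤ Module.finrank ℝ Vᗮ := by
    have h := Submodule.finrank_add_finrank_orthogonal (K := V)
    omega
  let b₀ := stdOrthonormalBasis ℝ (Vᗮ : Submodule ℝ E')
  let w : Fin k → E' := fun i => (b₀ (Fin.castLE hkW i) : E')
  have hwW : ∀ i, w i ∈ Vᗮ := fun i => SetLike.coe_mem _
  have hwo : Orthonormal ℝ w := by
    have hb := b₀.orthonormal
    rw [orthonormal_iff_ite] at hb ⊢
    intro i j
    rw [show (inner ℝ (w i) (w j) : ℝ) = inner ℝ (b₀ (Fin.castLE hkW i)) (b₀ (Fin.castLE hkW j)) from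
      (Submodule.coe_inner _ _ _).symm]
    rw [hb]
    simp [Fin.castLE, Fin.ext_iff]
  -- extend to an orthonormal basis
  let v : Fin k ⊕ Fin l → E' := Sum.elim w 0
  have hv : Orthonormal ℝ ((Set.range Sum.inl).restrict v) := by
    rw [orthonormal_iff_ite]
    rintro ⟨x, i, rfl⟩ ⟨x', i', rfl⟩
    have h1 : (Set.range Sum.inl).restrict v ⟨Sum.inl i, ⟨i, rfl⟩⟩ = w i := rfl
    have h2 : (Set.range Sum.inl).restrict v ⟨Sum.inl i', ⟨i', rfl⟩⟩ = w i' := rfl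
    rw [h1, h2, orthonormal_iff_ite.mp hwo i i']
    congr 1
    simp [Subtype.ext_iff]
  obtain ⟨b, hb⟩ := hv.exists_orthonormalBasis_extension_of_card_eq
    (by simpa using hdim)
  have hbW : ∀ i : Fin k, b (Sum.inl i) ∈ Vᗮ := by
    intro i
    rw [hb (Sum.inl i) ⟨i, rfl⟩]
    exact hwW i
  have horthb : ∀ (i : Fin k) (c : Fin m), ∑ r, b (Sum.inl i) r * y r c = 0 := by
    intro i c
    have hyV : cols c ∈ V := Submodule.subset_span ⟨c, rfl⟩
    have := (Submodule.mem_orthogonal V (b (Sum.inl i))).mp (hbW i) (cols c) hyV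
    rw [PiLp.inner_apply] at this
    simp only [RCLike.inner_apply, conj_trivial] at this
    calc ∑ r, b (Sum.inl i) r * y r c = ∑ r, cols c r * b (Sum.inl i) r := by
          exact Finset.sum_congr rfl fun r _ => mul_comm _ _
    _ = 0 := by rw [← this]; exact Finset.sum_congr rfl fun r _ => mul_comm _ _
  -- build the candidate matrix
  let g₁ : Matrix (Fin k ⊕ Fin l) (Fin k ⊕ Fin l) ℝ := Matrix.of fun r j => b j r
  have hsum : ∀ j j', ∑ r, g₁ r j * g₁ r j'
      = (1 : Matrix (Fin k ⊕ Fin l) (Fin k ⊕ Fin l) ℝ) j j' := by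
    intro j j'
    have := orthonormal_iff_ite.mp b.orthonormal j j'
    rw [PiLp.inner_apply] at this
    simp only [RCLike.inner_apply, conj_trivial] at this
    rw [Finset.sum_congr rfl fun r _ => mul_comm (b j' r) (b j r)] at this
    rw [show ∑ r, g₁ r j * g₁ r j' = ∑ r, b j r * b j' r from rfl, this, Matrix.one_apply]
  have hg₁ : g₁ᵀ * g₁ = 1 := by
    ext j j'
    rw [Matrix.mul_apply]
    simpa [Matrix.transpose_apply] using hsum j j'
  have hdet2 : g₁.det = 1 ∨ g₁.det = -1 := by
    have := congrArg Matrix.det hg₁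
    rw [Matrix.det_mul, Matrix.det_transpose, Matrix.det_one] at this
    exact mul_self_eq_one_iff.mp this
  -- fix the determinant sign
  obtain ⟨g, hg, hdet, horthg⟩ :
      ∃ g : Matrix (Fin k ⊕ Fin l) (Fin k ⊕ Fin l) ℝ, gᵀ * g = 1 ∧ g.det = 1 ∧
        ∀ (i : Fin k) (c : Fin m), ∑ r, g r (Sum.inl i) * y r c = 0 := by
    rcases hdet2 with h1 | h1
    · exact ⟨g₁, hg₁, h1, fun i c => horthb i c⟩
    · set j₀ : Fin k ⊕ Fin l := Sum.inr ⟨0, hl⟩ with hj₀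
      set g₂ := g₁.updateCol j₀ (fun r => -(g₁ r j₀)) with hg₂def
      have happ : ∀ r j, g₂ r j = (if j = j₀ then (-1 : ℝ) else 1) * g₁ r j := by
        intro r j
        rw [hg₂def, Matrix.updateCol_apply]
        split
        · next hh => rw [hh]; ring
        · ring
      have hsum₂ : ∀ j j', ∑ r, g₂ r j * g₂ r j'
          = (1 : Matrix (Fin k ⊕ Fin l) (Fin k ⊕ Fin l) ℝ) j j' := by
        intro j j'
        simp only [happ]
        have step : ∑ r, ((if j = j₀ then (-1 : ℝ) else 1) * g₁ r j) *
            ((if j' = j₀ then (-1 : ℝ) else 1) * g₁ r j')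
            = (if j = j₀ then (-1 : ℝ) else 1) * (if j' = j₀ then (-1 : ℝ) else 1)
              * ∑ r, g₁ r j * g₁ r j' := by
          rw [Finset.mul_sum]
          exact Finset.sum_congr rfl fun r _ => by ring
        rw [step, hsum j j']
        rcases eq_or_ne j j' with hh | hh
        · subst hh
          split_ifs <;> ring
        · rw [Matrix.one_apply_ne hh, mul_zero]
      have hg₂ : g₂ᵀ * g₂ = 1 := by
        ext j j'
        rw [Matrix.mul_apply]
        simpa [Matrix.transpose_apply] using hsum₂ j j'
      have hdet₂ : g₂.det = 1 := by
        have hcol : (fun r => -(g₁ r j₀)) = ((-1 : ℝ) • fun r => g₁ r j₀) := by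
          funext r; simp
        rw [hg₂def, hcol, Matrix.det_updateCol_smul, Matrix.updateCol_eq_self, h1]
        norm_num
      refine ⟨g₂, hg₂, hdet₂, fun i c => ?_⟩
      have : ∀ r, g₂ r (Sum.inl i) = g₁ r (Sum.inl i) := by
        intro r; simp [happ, hj₀]
      simp_rw [this]
      exact horthb i c
  refine ⟨g, Matrix.of fun i c => ∑ r, g r (Sum.inr i) * y r c, hg, hdet, ?_⟩
  have hinv : g * gᵀ = 1 := mul_eq_one_comm.mp hg
  have hgy : gᵀ * y = Matrix.fromRows 0 (Matrix.of fun i c => ∑ r, g r (Sum.inr i) * y r c) := by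
    ext r c
    cases r with
    | inl i =>
      rw [Matrix.mul_apply]
      simp only [Matrix.transpose_apply]
      rw [horthg i c]
      simp [Matrix.fromRows_apply_inl]
    | inr i =>
      rw [Matrix.mul_apply]
      simp [Matrix.fromRows_apply_inr, Matrix.transpose_apply]
  calc y = (g * gᵀ) * y := by rw [hinv, Matrix.one_mul]
  _ = g * (gᵀ * y) := Matrix.mul_assoc _ _ _
  _ = _ := by rw [hgy]; rfl

end RadonAux

open RadonAux
open scoped FourierTransform RealInnerProductSpace

/-- if `n - k ≥ m` (`n = k + l`, `m ≤ l`), the matrix `k`-plane Radon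
transform is injective on the Schwartz space: if `f̂(ξ,t) = 0` for all frames
`ξ ∈ V_{n,n-k}` and all `t ∈ M_{n-k,m}` then `f = 0`. -/
theorem radon_injective (k l m : ℕ) (hk : 0 < k) (hl : 0 < l) (hlm : m ≤ l)
    (f : SchwartzMap (Matrix (Fin k ⊕ Fin l) (Fin m) ℝ) ℂ)
    (h : ∀ (ξ : Matrix (Fin k ⊕ Fin l) (Fin l) ℝ), ξᵀ * ξ = 1 →
      ∀ (g : Matrix (Fin k ⊕ Fin l) (Fin k ⊕ Fin l) ℝ),
        gᵀ * g = 1 → g.det = 1 → g * xi0 k l = ξ →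
      ∀ t : Matrix (Fin l) (Fin m) ℝ,
        (∫ u : Matrix (Fin k) (Fin m) ℝ, f (g * Matrix.fromRows u t)) = 0) :
    f = 0 := by
  classical
  have hxi : (xi0 k l)ᵀ * (xi0 k l) = 1 := by
    rw [xi0, Matrix.transpose_fromRows, Matrix.fromCols_mul_fromRows]
    simp
  -- instances
  haveI ibD : BorelSpace (Matrix (Fin k ⊕ Fin l) (Fin m) ℝ) :=
    inferInstanceAs (BorelSpace ((Fin k ⊕ Fin l) → Fin m → ℝ))
  haveI iscD : SecondCountableTopology (Matrix (Fin k ⊕ Fin l) (Fin m) ℝ) :=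
    inferInstanceAs (SecondCountableTopology ((Fin k ⊕ Fin l) → Fin m → ℝ))
  haveI ihaar : (volume : Measure (Matrix (Fin k ⊕ Fin l) (Fin m) ℝ)).IsAddHaarMeasure :=
    (Measure.pi.isAddHaarMeasure _ :
      (Measure.IsAddHaarMeasure (volume : Measure ((Fin k ⊕ Fin l) → Fin m → ℝ))))
  haveI isf1 : SigmaFinite (volume : Measure (Matrix (Fin l) (Fin m) ℝ)) :=
    inferInstanceAs (SigmaFinite (volume : Measure (Fin l → Fin m → ℝ)))
  haveI isf2 : SigmaFinite (volume : Measure (Matrix (Fin k) (Fin m) ℝ)) :=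
    inferInstanceAs (SigmaFinite (volume : Measure (Fin k → Fin m → ℝ)))
  haveI isf3 : SigmaFinite (volume : Measure (Matrix (Fin k ⊕ Fin l) (Fin m) ℝ)) :=
    inferInstanceAs (SigmaFinite (volume : Measure (Fin k ⊕ Fin l → Fin m → ℝ)))
  set ψ := matEuclid (Fin k ⊕ Fin l) (Fin m) with hψdef
  have hψ := measurePreserving_matEuclid (Fin k ⊕ Fin l) (Fin m)
  set F : EuclideanSpace ℝ ((Fin k ⊕ Fin l) × Fin m) → ℂ := fun v => f (ψ.symm v) with hFdef
  have hψsc : Continuous (⇑ψ.symm) := by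
    show Continuous fun v : EuclideanSpace ℝ ((Fin k ⊕ Fin l) × Fin m) =>
      ((fun a b => v (a, b)) : Matrix (Fin k ⊕ Fin l) (Fin m) ℝ)
    refine continuous_pi fun a => continuous_pi fun b => ?_
    exact (continuous_apply (a, b)).comp (PiLp.continuous_ofLp 2 _)
  have hFc : Continuous F := f.continuous.comp hψsc
  haveI ibN : @BorelSpace (Matrix (Fin k ⊕ Fin l) (Fin m) ℝ)
      PseudoMetricSpace.toUniformSpace.toTopologicalSpace _ := ibD
  haveI itg : (volume : Measure (Matrix (Fin k ⊕ Fin l) (Fin m) ℝ)).HasTemperateGrowth :=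
    Measure.IsAddHaarMeasure.instHasTemperateGrowth (h := ihaar)
  have hFi : Integrable F := by
    have := ((hψ.symm).integrable_comp_emb ψ.symm.measurableEmbedding).mpr f.integrable
    exact this
  have hF0 : 𝓕 F = 0 := by
    funext w
    obtain ⟨g, s, hg, hdet, hys⟩ := exists_rotation k l m hl hlm (ψ.symm w)
    have hξ : (g * xi0 k l)ᵀ * (g * xi0 k l) = 1 := by
      rw [Matrix.transpose_mul, Matrix.mul_assoc, ← Matrix.mul_assoc gᵀ g, hg, Matrix.one_mul,
        hxi]
    have hh := h (g * xi0 k l) hξ g hg hdet rfl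
    have hw : w = ψ (g * Matrix.fromRows 0 s) := by
      rw [← hys, MeasurableEquiv.apply_symm_apply]
    -- the measurable equivalence used for the change of variables
    set Φ : ((Matrix (Fin l) (Fin m) ℝ) × (Matrix (Fin k) (Fin m) ℝ)) ≃ᵐ Matrix (Fin k ⊕ Fin l) (Fin m) ℝ :=
      ((MeasurableEquiv.prodComm :
          ((Matrix (Fin l) (Fin m) ℝ) × (Matrix (Fin k) (Fin m) ℝ)) ≃ᵐ _)).trans
        (((MeasurableEquiv.sumPiEquivProdPi (fun _ : Fin k ⊕ Fin l => Fin m → ℝ)).symm).trans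
          (mulLeftME (β := Fin m) g hg)) with hΦdef
    have hΦ : MeasurePreserving Φ volume volume := by
      have h1 : MeasurePreserving
          (MeasurableEquiv.prodComm :
            ((Matrix (Fin l) (Fin m) ℝ) × (Matrix (Fin k) (Fin m) ℝ)) ≃ᵐ _)
          volume volume := Measure.measurePreserving_swap
      have h2 := volume_measurePreserving_sumPiEquivProdPi_symm
        (fun _ : Fin k ⊕ Fin l => Fin m → ℝ)
      have h3 := measurePreserving_mulLeft (β := Fin m) g hg
      exact (h3.comp (h2.comp h1))
    have hΦapp : ∀ p : (Matrix (Fin l) (Fin m) ℝ) × (Matrix (Fin k) (Fin m) ℝ),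
        Φ p = g * Matrix.fromRows p.2 p.1 := by
      intro p
      have hX : ((MeasurableEquiv.sumPiEquivProdPi (fun _ : Fin k ⊕ Fin l => Fin m → ℝ)).symm
          (p.2, p.1) : Matrix (Fin k ⊕ Fin l) (Fin m) ℝ) = Matrix.fromRows p.2 p.1 := by
        funext r
        cases r <;> rfl
      show (mulLeftME (β := Fin m) g hg)
        ((MeasurableEquiv.sumPiEquivProdPi (fun _ : Fin k ⊕ Fin l => Fin m → ℝ)).symm
          (p.2, p.1)) = _
      rw [hX]
      rfl
    have hinner : ∀ x x' : Matrix (Fin k ⊕ Fin l) (Fin m) ℝ,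
        ⟪ψ x, ψ x'⟫ = ∑ p : (Fin k ⊕ Fin l) × Fin m, x p.1 p.2 * x' p.1 p.2 := by
      intro x x'
      rw [PiLp.inner_apply]
      simp only [RCLike.inner_apply, conj_trivial]
      exact Finset.sum_congr rfl fun _ _ => mul_comm _ _
    have hct : ∀ (t : Matrix (Fin l) (Fin m) ℝ) (u : Matrix (Fin k) (Fin m) ℝ),
        ⟪ψ (g * Matrix.fromRows u t), w⟫ = ∑ i, ∑ c, t i c * s i c := by
      intro t u
      rw [hw, hinner]
      refine (sum_mul_orth hg _ _).trans ?_
      rw [Fintype.sum_prod_type, Fintype.sum_sum_type]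
      simp [Matrix.fromRows_apply_inl, Matrix.fromRows_apply_inr]
    -- rewrite the Fourier integral as an iterated integral
    rw [Real.fourier_eq]
    rw [← hψ.integral_comp ψ.measurableEmbedding]
    rw [← hΦ.integral_comp Φ.measurableEmbedding]
    have hpoint : ∀ p : (Matrix (Fin l) (Fin m) ℝ) × (Matrix (Fin k) (Fin m) ℝ),
        (𝐞 (-⟪ψ (Φ p), w⟫) • F (ψ (Φ p)) : ℂ)
          = (𝐞 (-(∑ i, ∑ c, p.1 i c * s i c)) : ℂ) * f (g * Matrix.fromRows p.2 p.1) := by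
      intro p
      rw [hΦapp p, hct p.1 p.2, Circle.smul_def]
      have hFp : F (ψ (g * Matrix.fromRows p.2 p.1)) = f (g * Matrix.fromRows p.2 p.1) := by
        rw [hFdef]
        simp only [MeasurableEquiv.symm_apply_apply]
      rw [hFp, smul_eq_mul]
    -- integrability on the product space
    have hGint : Integrable (fun v : EuclideanSpace ℝ ((Fin k ⊕ Fin l) × Fin m) =>
        (𝐞 (-⟪v, w⟫) • F v : ℂ)) volume :=
      (Real.fourierIntegral_convergent_iff w).mpr hFi
    have hcomp : Integrable (fun p : (Matrix (Fin l) (Fin m) ℝ) × (Matrix (Fin k) (Fin m) ℝ) =>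
        (𝐞 (-⟪ψ (Φ p), w⟫) • F (ψ (Φ p)) : ℂ)) volume := by
      have := ((hψ.comp hΦ).integrable_comp_emb
        (ψ.measurableEmbedding.comp Φ.measurableEmbedding)).mpr hGint
      exact this
    have hcomp2 : Integrable (fun p : (Matrix (Fin l) (Fin m) ℝ) × (Matrix (Fin k) (Fin m) ℝ) =>
        (𝐞 (-(∑ i, ∑ c, p.1 i c * s i c)) : ℂ) * f (g * Matrix.fromRows p.2 p.1))
        ((volume : Measure (Matrix (Fin l) (Fin m) ℝ)).prod (volume : Measure (Matrix (Fin k) (Fin m) ℝ))) := by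
      rw [← Measure.volume_eq_prod]
      exact hcomp.congr (Filter.Eventually.of_forall fun p => (hpoint p))
    calc (∫ p : (Matrix (Fin l) (Fin m) ℝ) × (Matrix (Fin k) (Fin m) ℝ),
            (𝐞 (-⟪ψ (Φ p), w⟫) • F (ψ (Φ p)) : ℂ))
        = ∫ p : (Matrix (Fin l) (Fin m) ℝ) × (Matrix (Fin k) (Fin m) ℝ),
            (𝐞 (-(∑ i, ∑ c, p.1 i c * s i c)) : ℂ) * f (g * Matrix.fromRows p.2 p.1) := by
          exact integral_congr_ae (Filter.Eventually.of_forall fun p => hpoint p)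
    _ = ∫ t : Matrix (Fin l) (Fin m) ℝ, ∫ u : Matrix (Fin k) (Fin m) ℝ,
            (𝐞 (-(∑ i, ∑ c, t i c * s i c)) : ℂ) * f (g * Matrix.fromRows u t) := by
          rw [show ((volume : Measure ((Matrix (Fin l) (Fin m) ℝ) × (Matrix (Fin k) (Fin m) ℝ))))
            = ((volume : Measure (Matrix (Fin l) (Fin m) ℝ)).prod
                (volume : Measure (Matrix (Fin k) (Fin m) ℝ))) from rfl]
          exact MeasureTheory.integral_prod _ hcomp2
    _ = ∫ t : Matrix (Fin l) (Fin m) ℝ, (𝐞 (-(∑ i, ∑ c, t i c * s i c)) : ℂ)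
            * ∫ u : Matrix (Fin k) (Fin m) ℝ, f (g * Matrix.fromRows u t) := by
          refine integral_congr_ae (Filter.Eventually.of_forall fun t => ?_)
          exact integral_const_mul _ _
    _ = 0 := by
          have : ∀ t : Matrix (Fin l) (Fin m) ℝ,
              (𝐞 (-(∑ i, ∑ c, t i c * s i c)) : ℂ)
                * ∫ u : Matrix (Fin k) (Fin m) ℝ, f (g * Matrix.fromRows u t) = 0 := by
            intro t
            rw [hh t, mul_zero]
          simp only [this, integral_zero]
  -- Fourier inversion
  have hFinv := hFc.fourierInv_fourier_eq hFi (by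
    rw [hF0]
    exact integrable_zero _ ℂ (volume : Measure (EuclideanSpace ℝ ((Fin k ⊕ Fin l) × Fin m))))
  rw [hF0] at hFinv
  have hF0' : F = 0 := by
    funext v
    rw [← hFinv]
    show 𝓕⁻ (0 : EuclideanSpace ℝ ((Fin k ⊕ Fin l) × Fin m) → ℂ) v = 0
    rw [Real.fourierInv_eq]
    simp
  ext x
  have hx : F (ψ x) = f x := by
    rw [hFdef]
    simp only [MeasurableEquiv.symm_apply_apply]
  rw [← hx, hF0']
  simp
end
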